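/- Define h : [0,∞) → ℝ² by h(t) = (sin(eᵗ), cos(eᵗ)). Then h belongs to the class 𝒟 but not to the class 𝒜𝒟; that is, sup_{0 ≤ η ≤ 1} ‖∫_t^{t+η} h(s) ds‖₂ → 0 as t → ∞, while ∫_t^{t+1} ‖h(s)‖₂ ds = 1 for every t ≥ 0 and hence does not tend to 0. Consequently the inclusion 𝒜𝒟 ⊆ 𝒟 is strict. -/

import Mathlib

open Filter

/-- The function `h(t) = (sin(eᵗ), cos(eᵗ))` as a curve in Euclidean `ℝ²`. -/
noncomputable def hOsc : ℝ → EuclideanSpace ℝ (Fin 2) := fun t =>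
  (WithLp.equiv 2 (Fin 2 → ℝ)).symm ![Real.sin (Real.exp t), Real.cos (Real.exp t)]

lemma hOsc_norm (t : ℝ) : ‖hOsc t‖ = 1 := by
  rw [EuclideanSpace.norm_eq]
  simp [hOsc, Fin.sum_univ_two, Real.sin_sq_add_cos_sq]

lemma osc_bound (g v : ℝ → ℝ) (hg : Continuous g)
    (hv : ∀ x, HasDerivAt v (Real.exp x * g x) x) (hvb : ∀ x, |v x| ≤ 1)
    (a b : ℝ) (hab : a ≤ b) : |∫ s in a..b, g s| ≤ 3 * Real.exp (-a) := by
  have hcong : (∫ s in a..b, g s) = ∫ s in a..b, Real.exp (-s) * (Real.exp s * g s) := by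
    apply intervalIntegral.integral_congr
    intro x _
    show g x = Real.exp (-x) * (Real.exp x * g x)
    rw [← mul_assoc, ← Real.exp_add]
    simp
  have hu : ∀ x ∈ Set.uIcc a b, HasDerivAt (fun s => Real.exp (-s)) (-Real.exp (-x)) x := by
    intro x _
    simpa [Function.comp_def] using ((Real.hasDerivAt_exp (-x)).comp x (hasDerivAt_neg x))
  have hcv : Continuous v := by
    have : Differentiable ℝ v := fun x => (hv x).differentiableAt
    exact this.continuous
  have IBP := intervalIntegral.integral_mul_deriv_eq_deriv_mul hu
    (fun x _ => hv x)
    (((Real.continuous_exp.comp continuous_neg).neg).intervalIntegrable a b)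
    ((Real.continuous_exp.mul hg).intervalIntegrable a b)
  rw [hcong, IBP]
  have h1 : |Real.exp (-b) * v b| ≤ Real.exp (-a) := by
    rw [abs_mul, abs_of_pos (Real.exp_pos _)]
    calc Real.exp (-b) * |v b| ≤ Real.exp (-b) * 1 :=
          mul_le_mul_of_nonneg_left (hvb b) (Real.exp_pos _).le
      _ ≤ Real.exp (-a) := by rw [mul_one]; exact Real.exp_le_exp.2 (by linarith)
  have h2 : |Real.exp (-a) * v a| ≤ Real.exp (-a) := by
    rw [abs_mul, abs_of_pos (Real.exp_pos _)]
    calc Real.exp (-a) * |v a| ≤ Real.exp (-a) * 1 :=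
          mul_le_mul_of_nonneg_left (hvb a) (Real.exp_pos _).le
      _ = Real.exp (-a) := mul_one _
  have h3 : |∫ x in a..b, -Real.exp (-x) * v x| ≤ Real.exp (-a) := by
    have hb : |∫ x in a..b, -Real.exp (-x) * v x| ≤ ∫ x in a..b, |(-Real.exp (-x) * v x)| :=
      intervalIntegral.abs_integral_le_integral_abs hab
    have hmono : (∫ x in a..b, |(-Real.exp (-x) * v x)|) ≤ ∫ x in a..b, Real.exp (-x) := by
      apply intervalIntegral.integral_mono_on hab
      · exact ((((Real.continuous_exp.comp continuous_neg).neg).mul hcv).abs).intervalIntegrable a b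
      · exact (Real.continuous_exp.comp continuous_neg).intervalIntegrable a b
      · intro x _
        rw [abs_mul, abs_neg, abs_of_pos (Real.exp_pos _)]
        calc Real.exp (-x) * |v x| ≤ Real.exp (-x) * 1 :=
              mul_le_mul_of_nonneg_left (hvb x) (Real.exp_pos _).le
          _ = Real.exp (-x) := mul_one _
    have hint : (∫ x in a..b, Real.exp (-x)) = -Real.exp (-b) + Real.exp (-a) := by
      have : ∀ x ∈ Set.uIcc a b, HasDerivAt (fun s => -Real.exp (-s)) (Real.exp (-x)) x := by
        intro x _
        simpa [Function.comp_def, Pi.neg_def] using ((Real.hasDerivAt_exp (-x)).comp x (hasDerivAt_neg x)).neg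
      rw [intervalIntegral.integral_eq_sub_of_hasDerivAt this
        ((Real.continuous_exp.comp continuous_neg).intervalIntegrable a b)]
      ring
    have : (∫ x in a..b, Real.exp (-x)) ≤ Real.exp (-a) := by
      rw [hint]; have := Real.exp_pos (-b); linarith
    linarith [hb.trans hmono]
  calc |Real.exp (-b) * v b - Real.exp (-a) * v a - ∫ x in a..b, -Real.exp (-x) * v x|
      ≤ |Real.exp (-b) * v b| + |Real.exp (-a) * v a| + |∫ x in a..b, -Real.exp (-x) * v x| := by
        exact (abs_sub _ _).trans (by gcongr; exact abs_sub _ _)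
    _ ≤ 3 * Real.exp (-a) := by linarith

lemma hOsc_cont : Continuous hOsc := by
  unfold hOsc
  apply Continuous.comp (PiLp.continuous_toLp 2 (fun _ : Fin 2 => ℝ))
  apply continuous_pi
  intro i
  fin_cases i <;> simp <;> fun_prop

lemma sin_bound (a b : ℝ) (hab : a ≤ b) :
    |∫ s in a..b, Real.sin (Real.exp s)| ≤ 3 * Real.exp (-a) := by
  apply osc_bound _ (fun s => -Real.cos (Real.exp s)) (by fun_prop) _ _ a b hab
  · intro x
    have : HasDerivAt (fun s => -Real.cos (Real.exp s)) _ x := ((Real.hasDerivAt_exp x).cos).neg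
    convert this using 1
    ring
  · intro x
    rw [abs_neg]
    exact Real.abs_cos_le_one _

lemma cos_bound (a b : ℝ) (hab : a ≤ b) :
    |∫ s in a..b, Real.cos (Real.exp s)| ≤ 3 * Real.exp (-a) := by
  apply osc_bound _ (fun s => Real.sin (Real.exp s)) (by fun_prop) _ _ a b hab
  · intro x
    have := (Real.hasDerivAt_exp x).sin
    convert this using 1
    ring
  · intro x
    exact Real.abs_sin_le_one _

lemma norm_le_two (x : EuclideanSpace ℝ (Fin 2)) : ‖x‖ ≤ |x 0| + |x 1| := by
  rw [EuclideanSpace.norm_eq, Fin.sum_univ_two]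
  simp only [Real.norm_eq_abs, sq_abs]
  have h : x 0 ^ 2 + x 1 ^ 2 ≤ (|x 0| + |x 1|) ^ 2 := by
    have := abs_nonneg (x 0); have := abs_nonneg (x 1)
    nlinarith [sq_abs (x 0), sq_abs (x 1)]
  calc Real.sqrt (x 0 ^ 2 + x 1 ^ 2) ≤ Real.sqrt ((|x 0| + |x 1|) ^ 2) := Real.sqrt_le_sqrt h
    _ = |x 0| + |x 1| := by
        rw [Real.sqrt_sq (by positivity)]

lemma key_bound (t b : ℝ) (hab : t ≤ b) :
    ‖∫ s in t..b, hOsc s‖ ≤ 6 * Real.exp (-t) := by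
  set I := ∫ s in t..b, hOsc s
  have hint : IntervalIntegrable hOsc MeasureTheory.volume t b := hOsc_cont.intervalIntegrable t b
  have e0 : ∀ s, hOsc s 0 = Real.sin (Real.exp s) := fun s => by simp [hOsc]
  have e1 : ∀ s, hOsc s 1 = Real.cos (Real.exp s) := fun s => by simp [hOsc]
  have h0 : I 0 = ∫ s in t..b, Real.sin (Real.exp s) := by
    have h := (EuclideanSpace.proj (𝕜 := ℝ) (0 : Fin 2)).intervalIntegral_comp_comm hint
    simp only [PiLp.proj_apply, e0] at h
    exact h.symm
  have h1 : I 1 = ∫ s in t..b, Real.cos (Real.exp s) := by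
    have h := (EuclideanSpace.proj (𝕜 := ℝ) (1 : Fin 2)).intervalIntegral_comp_comm hint
    simp only [PiLp.proj_apply, e1] at h
    exact h.symm
  calc ‖I‖ ≤ |I 0| + |I 1| := norm_le_two I
    _ ≤ 3 * Real.exp (-t) + 3 * Real.exp (-t) := by
        rw [h0, h1]
        exact add_le_add (sin_bound t b hab) (cos_bound t b hab)
    _ = 6 * Real.exp (-t) := by ring


/-- `h(t) = (sin(eᵗ), cos(eᵗ))` belongs to the class 𝒟 but not to
𝒜𝒟: the suprema `sup_{0 ≤ η ≤ 1} ‖∫_t^{t+η} h‖₂` tend to `0`, while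
`∫_t^{t+1} ‖h(s)‖₂ ds = 1` for all `t ≥ 0`, hence does not tend to `0`. -/
theorem stmt_7 :
    Tendsto (fun t : ℝ => ⨆ η ∈ Set.Icc (0:ℝ) 1, ‖∫ s in t..(t + η), hOsc s‖)
      atTop (nhds 0) ∧
    (∀ t : ℝ, 0 ≤ t → (∫ s in t..(t + 1), ‖hOsc s‖) = 1) ∧
    ¬ Tendsto (fun t : ℝ => ∫ s in t..(t + 1), ‖hOsc s‖) atTop (nhds 0) := by
  have hnorm : ∀ t : ℝ, (∫ s in t..(t + 1), ‖hOsc s‖) = 1 := by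
    intro t
    simp [hOsc_norm]
  refine ⟨?_, fun t _ => hnorm t, ?_⟩
  · have hle : ∀ t : ℝ, (⨆ η ∈ Set.Icc (0:ℝ) 1, ‖∫ s in t..(t + η), hOsc s‖) ≤ 6 * Real.exp (-t) := by
      intro t
      apply Real.iSup_le _ (by positivity)
      intro η
      apply Real.iSup_le _ (by positivity)
      intro hη
      exact key_bound t (t + η) (by linarith [hη.1])
    have hge : ∀ t : ℝ, 0 ≤ ⨆ η ∈ Set.Icc (0:ℝ) 1, ‖∫ s in t..(t + η), hOsc s‖ := by
      intro t
      apply Real.iSup_nonneg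
      intro η
      exact Real.iSup_nonneg fun _ => norm_nonneg _
    have htend : Tendsto (fun t : ℝ => 6 * Real.exp (-t)) atTop (nhds 0) := by
      simpa using (Real.tendsto_exp_neg_atTop_nhds_zero.const_mul 6)
    exact squeeze_zero hge hle htend
  · intro h
    have h2 : Tendsto (fun t : ℝ => ∫ s in t..(t + 1), ‖hOsc s‖) atTop (nhds 1) := by
      have : (fun t : ℝ => ∫ s in t..(t + 1), ‖hOsc s‖) = fun _ => (1:ℝ) := funext hnorm
      rw [this]; exact tendsto_const_nhds
    exact one_ne_zero (tendsto_nhds_unique h2 h)
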